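/- Let Λ be a bivariate tail dependence function and let C^LEV(·; Λ) be the corresponding lower extreme value copula. Then for every w ∈ [0,∞)², the limit lim_{s↓0} C^LEV(sw1, sw2; Λ)/s exists and equals Λ(w1, w2); i.e. the tail dependence function of C^LEV(·; Λ) is Λ itself. -/

import Mathlib

open Filter Set

/-- A bivariate tail dependence function: `Λ(w1,w2) = (w1+w2)·A(w1/(w1+w2))` for a concave
`A : [0,1] → [0,1/2]` with `0 ≤ A(t) ≤ min t (1-t)`. -/
def IsBivariateTDF (Λ : ℝ → ℝ → ℝ) : Prop :=
  ∃ A : ℝ → ℝ, ConcaveOn ℝ (Icc (0:ℝ) 1) A ∧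
    (∀ t ∈ Icc (0:ℝ) 1, 0 ≤ A t ∧ A t ≤ min t (1 - t)) ∧
    Λ 0 0 = 0 ∧
    (∀ w1 w2 : ℝ, 0 ≤ w1 → 0 ≤ w2 → (w1, w2) ≠ (0, 0) →
      Λ w1 w2 = (w1 + w2) * A (w1 / (w1 + w2)))

/-- The extreme value copula of a bivariate tail dependence function `Λ`. -/
noncomputable def CEV (Λ : ℝ → ℝ → ℝ) (u1 u2 : ℝ) : ℝ :=
  if 0 < u1 ∧ 0 < u2 then
    Real.exp (Real.log u1 + Real.log u2 + Λ (-Real.log u1) (-Real.log u2))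
  else 0

/-- The lower extreme value copula of a bivariate tail dependence function `Λ`
(the survival copula of `CEV Λ`). -/
noncomputable def CLEV (Λ : ℝ → ℝ → ℝ) (u1 u2 : ℝ) : ℝ :=
  u1 + u2 - 1 + CEV Λ (1 - u1) (1 - u2)

section A
variable {A : ℝ → ℝ}

lemma A_zero (hb : ∀ t ∈ Icc (0:ℝ) 1, 0 ≤ A t ∧ A t ≤ min t (1 - t)) : A 0 = 0 := by
  have h := hb 0 (by norm_num)
  have h2 := h.2
  simp at h2
  linarith [h.1]

lemma A_one (hb : ∀ t ∈ Icc (0:ℝ) 1, 0 ≤ A t ∧ A t ≤ min t (1 - t)) : A 1 = 0 := by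
  have h := hb 1 (by norm_num)
  have h2 := h.2
  simp at h2
  linarith [h.1]

lemma A_ratio (hA : ConcaveOn ℝ (Icc (0:ℝ) 1) A)
    (hb : ∀ t ∈ Icc (0:ℝ) 1, 0 ≤ A t ∧ A t ≤ min t (1 - t))
    {t t' : ℝ} (h0 : 0 ≤ t) (htt : t ≤ t') (h1 : t' ≤ 1) (hpos : 0 < t') :
    (t / t') * A t' ≤ A t := by
  have hmem' : t' ∈ Icc (0:ℝ) 1 := ⟨hpos.le, h1⟩
  have h0mem : (0:ℝ) ∈ Icc (0:ℝ) 1 := by norm_num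
  have hμ : 0 ≤ t / t' := div_nonneg h0 hpos.le
  have hμ1 : t / t' ≤ 1 := (div_le_one hpos).mpr htt
  have key := hA.2 hmem' h0mem hμ (show (0:ℝ) ≤ 1 - t/t' by linarith) (by ring)
  have hx : (t / t') • t' + (1 - t / t') • (0:ℝ) = t := by
    rw [smul_eq_mul, smul_eq_mul, mul_zero, add_zero, div_mul_cancel₀ _ hpos.ne']
  rw [hx] at key
  have hA0 : 0 ≤ A 0 := (hb 0 h0mem).1
  simp only [smul_eq_mul] at key
  nlinarith [mul_nonneg (show (0:ℝ) ≤ 1 - t/t' by linarith) hA0]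

lemma A_ratio' (hA : ConcaveOn ℝ (Icc (0:ℝ) 1) A)
    (hb : ∀ t ∈ Icc (0:ℝ) 1, 0 ≤ A t ∧ A t ≤ min t (1 - t))
    {t t' : ℝ} (h0 : 0 ≤ t) (htt : t ≤ t') (h1 : t' < 1) :
    ((1 - t') / (1 - t)) * A t ≤ A t' := by
  have ht1 : t < 1 := lt_of_le_of_lt htt h1
  have hmem : t ∈ Icc (0:ℝ) 1 := ⟨h0, ht1.le⟩
  have h1mem : (1:ℝ) ∈ Icc (0:ℝ) 1 := by norm_num
  have hd : 0 < 1 - t := by linarith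
  have hμ : 0 ≤ (1 - t') / (1 - t) := div_nonneg (by linarith) hd.le
  have hμ1 : (1 - t') / (1 - t) ≤ 1 := (div_le_one hd).mpr (by linarith)
  have key := hA.2 hmem h1mem hμ (show (0:ℝ) ≤ 1 - (1-t')/(1-t) by linarith) (by ring)
  have hx : ((1 - t') / (1 - t)) • t + (1 - (1 - t') / (1 - t)) • (1:ℝ) = t' := by
    rw [smul_eq_mul, smul_eq_mul, mul_one]
    field_simp [hd.ne']
    ring
  rw [hx] at key
  have hA1 : 0 ≤ A 1 := (hb 1 h1mem).1
  simp only [smul_eq_mul] at key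
  nlinarith [mul_nonneg (show (0:ℝ) ≤ 1 - (1-t')/(1-t) by linarith) hA1]

end A

section lam
variable {Λ : ℝ → ℝ → ℝ}

lemma ratio_mem {a b : ℝ} (ha : 0 ≤ a) (hb : 0 ≤ b) (hab : 0 < a + b) :
    a / (a + b) ∈ Icc (0:ℝ) 1 :=
  ⟨div_nonneg ha hab.le, (div_le_one hab).mpr (by linarith)⟩

lemma lam_zero_left (hΛ : IsBivariateTDF Λ) {b : ℝ} (hb : 0 ≤ b) : Λ 0 b = 0 := by
  obtain ⟨A, hA, hbd, h00, hrep⟩ := hΛ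
  rcases eq_or_lt_of_le hb with h | h
  · rw [← h]; exact h00
  · rw [hrep 0 b le_rfl hb (by simp [ne_of_gt h]), zero_div, A_zero hbd, mul_zero]

lemma lam_zero_right (hΛ : IsBivariateTDF Λ) {a : ℝ} (ha : 0 ≤ a) : Λ a 0 = 0 := by
  obtain ⟨A, hA, hbd, h00, hrep⟩ := hΛ
  rcases eq_or_lt_of_le ha with h | h
  · rw [← h]; exact h00
  · rw [hrep a 0 ha le_rfl (by simp [ne_of_gt h]), add_zero, div_self (ne_of_gt h),
      A_one hbd, mul_zero]

lemma lam_nonneg (hΛ : IsBivariateTDF Λ) {a b : ℝ} (ha : 0 ≤ a) (hb : 0 ≤ b) :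
    0 ≤ Λ a b := by
  obtain ⟨A, hA, hbd, h00, hrep⟩ := hΛ
  by_cases hz : (a, b) = (0, 0)
  · rw [Prod.mk.injEq] at hz; rw [hz.1, hz.2, h00]
  · have hab : 0 < a + b := by
      rcases (lt_or_eq_of_le ha) with h | h
      · linarith
      · rcases (lt_or_eq_of_le hb) with h' | h'
        · linarith
        · exact absurd (by rw [← h, ← h']) hz
    rw [hrep a b ha hb hz]
    exact mul_nonneg hab.le (hbd _ (ratio_mem ha hb hab)).1

lemma lam_le_left (hΛ : IsBivariateTDF Λ) {a b : ℝ} (ha : 0 ≤ a) (hb : 0 ≤ b) :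
    Λ a b ≤ a := by
  obtain ⟨A, hA, hbd, h00, hrep⟩ := hΛ
  by_cases hz : (a, b) = (0, 0)
  · rw [Prod.mk.injEq] at hz; rw [hz.1, hz.2, h00]
  · have hab : 0 < a + b := by
      rcases (lt_or_eq_of_le ha) with h | h
      · linarith
      · rcases (lt_or_eq_of_le hb) with h' | h'
        · linarith
        · exact absurd (by rw [← h, ← h']) hz
    rw [hrep a b ha hb hz]
    have h1 := ((hbd _ (ratio_mem ha hb hab)).2.trans (min_le_left _ _))
    calc (a + b) * A (a / (a + b)) ≤ (a + b) * (a / (a + b)) :=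
          mul_le_mul_of_nonneg_left h1 hab.le
      _ = a := by field_simp

lemma lam_le_right (hΛ : IsBivariateTDF Λ) {a b : ℝ} (ha : 0 ≤ a) (hb : 0 ≤ b) :
    Λ a b ≤ b := by
  obtain ⟨A, hA, hbd, h00, hrep⟩ := hΛ
  by_cases hz : (a, b) = (0, 0)
  · rw [Prod.mk.injEq] at hz; rw [hz.1, hz.2, h00]
  · have hab : 0 < a + b := by
      rcases (lt_or_eq_of_le ha) with h | h
      · linarith
      · rcases (lt_or_eq_of_le hb) with h' | h'
        · linarith
        · exact absurd (by rw [← h, ← h']) hz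
    rw [hrep a b ha hb hz]
    have h1 := ((hbd _ (ratio_mem ha hb hab)).2.trans (min_le_right _ _))
    calc (a + b) * A (a / (a + b)) ≤ (a + b) * (1 - a / (a + b)) :=
          mul_le_mul_of_nonneg_left h1 hab.le
      _ = b := by field_simp; ring

lemma lam_hom (hΛ : IsBivariateTDF Λ) {a b c : ℝ} (ha : 0 ≤ a) (hb : 0 ≤ b) (hc : 0 < c) :
    Λ (c * a) (c * b) = c * Λ a b := by
  obtain ⟨A, hA, hbd, h00, hrep⟩ := hΛ
  by_cases hz : (a, b) = (0, 0)
  · rw [Prod.mk.injEq] at hz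
    rw [hz.1, hz.2, mul_zero, h00, mul_zero]
  · have hz' : (c * a, c * b) ≠ (0, 0) := by
      intro h
      have h1 : c * a = 0 := congrArg Prod.fst h
      have h2 : c * b = 0 := congrArg Prod.snd h
      exact hz (Prod.ext ((mul_eq_zero.mp h1).resolve_left hc.ne')
        ((mul_eq_zero.mp h2).resolve_left hc.ne'))
    rw [hrep a b ha hb hz, hrep (c*a) (c*b) (by positivity) (by positivity) hz']
    have hq : c * a / (c * a + c * b) = a / (a + b) := by
      rw [← mul_add, mul_div_mul_left _ _ hc.ne']
    rw [hq]; ring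
end lam

section lam2
variable {Λ : ℝ → ℝ → ℝ}

lemma lam_swap (hΛ : IsBivariateTDF Λ) : IsBivariateTDF (fun a b => Λ b a) := by
  obtain ⟨A, hA, hbd, h00, hrep⟩ := hΛ
  refine ⟨fun t => A (1 - t), ?_, ?_, h00, ?_⟩
  · refine ⟨convex_Icc 0 1, ?_⟩
    intro x hx y hy p q hp hq hpq
    have hx' : (1:ℝ) - x ∈ Icc (0:ℝ) 1 := ⟨by linarith [hx.2], by linarith [hx.1]⟩
    have hy' : (1:ℝ) - y ∈ Icc (0:ℝ) 1 := ⟨by linarith [hy.2], by linarith [hy.1]⟩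
    have key := hA.2 hx' hy' hp hq hpq
    have he : p • ((1:ℝ) - x) + q • (1 - y) = 1 - (p • x + q • y) := by
      simp only [smul_eq_mul]; nlinarith [hpq]
    rw [he] at key
    exact key
  · intro t ht
    have ht' : (1:ℝ) - t ∈ Icc (0:ℝ) 1 := ⟨by linarith [ht.2], by linarith [ht.1]⟩
    refine ⟨(hbd _ ht').1, ?_⟩
    have := (hbd _ ht').2
    simpa [min_comm] using this
  · intro w1 w2 h1 h2 hz
    have hz' : (w2, w1) ≠ (0, 0) := by
      intro h
      have ha : w2 = 0 := congrArg Prod.fst h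
      have hb : w1 = 0 := congrArg Prod.snd h
      exact hz (Prod.ext hb ha)
    have hab : 0 < w1 + w2 := by
      rcases (lt_or_eq_of_le h1) with h | h
      · linarith
      · rcases (lt_or_eq_of_le h2) with h' | h'
        · linarith
        · exact absurd (Prod.ext h.symm h'.symm) hz
    show Λ w2 w1 = (w1 + w2) * A (1 - w1 / (w1 + w2))
    rw [hrep w2 w1 h2 h1 hz']
    have : w2 / (w2 + w1) = 1 - w1 / (w1 + w2) := by
      rw [add_comm w2 w1, eq_sub_iff_add_eq, ← add_div, add_comm w2 w1, div_self hab.ne']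
    rw [this]
    ring_nf

lemma lam_mono_left (hΛ : IsBivariateTDF Λ) {a a' b : ℝ} (ha : 0 ≤ a) (hb : 0 ≤ b)
    (haa : a ≤ a') : Λ a b ≤ Λ a' b := by
  rcases eq_or_lt_of_le hb with h | hbpos
  · rw [← h, lam_zero_right hΛ ha, lam_zero_right hΛ (ha.trans haa)]
  rcases eq_or_lt_of_le ha with h | hapos
  · rw [← h, lam_zero_left hΛ hbpos.le]
    exact lam_nonneg hΛ (ha.trans haa) hbpos.le
  obtain ⟨A, hA, hbd, h00, hrep⟩ := hΛ
  have ha' : 0 < a' := lt_of_lt_of_le hapos haa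
  have hab : 0 < a + b := by linarith
  have hab' : 0 < a' + b := by linarith
  set t := a / (a + b) with htdef
  set t' := a' / (a' + b) with ht'def
  have h0t : 0 ≤ t := div_nonneg hapos.le hab.le
  have htt' : t ≤ t' := by
    rw [htdef, ht'def, div_le_div_iff₀ hab hab']
    nlinarith
  have ht'1 : t' < 1 := by
    rw [ht'def, div_lt_one hab']
    linarith
  have key := A_ratio' hA hbd h0t htt' ht'1
  have hzab : (a, b) ≠ (0, 0) := by
    intro h; exact absurd (congrArg Prod.snd h) hbpos.ne'
  have hzab' : (a', b) ≠ (0, 0) := by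
    intro h; exact absurd (congrArg Prod.snd h) hbpos.ne'
  rw [hrep a b hapos.le hbpos.le hzab, hrep a' b ha'.le hbpos.le hzab']
  have hscal : (a' + b) * ((1 - t') / (1 - t)) = a + b := by
    rw [htdef, ht'def]
    field_simp [hbpos.ne']
    ring
  calc (a + b) * A t = (a' + b) * (((1 - t') / (1 - t)) * A t) := by
        rw [← mul_assoc, hscal]
    _ ≤ (a' + b) * A t' := mul_le_mul_of_nonneg_left key hab'.le

lemma lam_lip_left (hΛ : IsBivariateTDF Λ) {a a' b : ℝ} (ha : 0 ≤ a) (hb : 0 ≤ b)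
    (haa : a ≤ a') : Λ a' b ≤ Λ a b + (a' - a) := by
  rcases eq_or_lt_of_le ha with h | hapos
  · rw [← h, lam_zero_left hΛ hb]
    have := lam_le_left hΛ (ha.trans haa) hb
    linarith
  obtain ⟨A, hA, hbd, h00, hrep⟩ := hΛ
  have ha' : 0 < a' := lt_of_lt_of_le hapos haa
  have hab : 0 < a + b := by linarith
  have hab' : 0 < a' + b := by linarith
  set t := a / (a + b) with htdef
  set t' := a' / (a' + b) with ht'def
  have h0t : 0 ≤ t := div_nonneg hapos.le hab.le
  have htpos : 0 < t := div_pos hapos hab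
  have ht'pos : 0 < t' := div_pos ha' hab'
  have htt' : t ≤ t' := by
    rw [htdef, ht'def, div_le_div_iff₀ hab hab']
    nlinarith
  have ht'1 : t' ≤ 1 := by
    rw [ht'def, div_le_one hab']
    linarith
  have key := A_ratio hA hbd h0t htt' ht'1 ht'pos
  -- key : (t/t') * A t' ≤ A t, so A t' ≤ (t'/t) * A t
  have key2 : A t' ≤ (t' / t) * A t := by
    rw [← sub_nonneg] at key ⊢
    have h1 : (t' / t) * A t - A t' = (t' / t) * (A t - (t / t') * A t') := by
      field_simp
    rw [h1]
    exact mul_nonneg (le_of_lt (div_pos ht'pos htpos)) (by linarith)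
  have hzab : (a, b) ≠ (0, 0) := by
    intro h; exact absurd (congrArg Prod.fst h) hapos.ne'
  have hzab' : (a', b) ≠ (0, 0) := by
    intro h; exact absurd (congrArg Prod.fst h) ha'.ne'
  have hLab : Λ a b = (a + b) * A t := hrep a b hapos.le hb hzab
  have hLab_le : Λ a b ≤ a := lam_le_left ⟨A, hA, hbd, h00, hrep⟩ hapos.le hb
  have hAtnn : 0 ≤ A t := (hbd t (ratio_mem hapos.le hb hab)).1
  have hscal : (a' + b) * (t' / t) = a' * (a + b) / a := by
    rw [htdef, ht'def]
    field_simp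
  have step : Λ a' b ≤ (a' / a) * Λ a b := by
    rw [hrep a' b ha'.le hb hzab', hLab]
    calc (a' + b) * A t' ≤ (a' + b) * ((t' / t) * A t) :=
          mul_le_mul_of_nonneg_left key2 hab'.le
      _ = (a' / a) * ((a + b) * A t) := by
          rw [← mul_assoc, hscal]; field_simp
  have hfrac : (a' / a) * Λ a b = Λ a b + ((a' - a) / a) * Λ a b := by
    field_simp
    ring
  have hlast : ((a' - a) / a) * Λ a b ≤ (a' - a) := by
    calc ((a' - a) / a) * Λ a b ≤ ((a' - a) / a) * a :=
          mul_le_mul_of_nonneg_left hLab_le (div_nonneg (by linarith) hapos.le)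
      _ = a' - a := by field_simp
  linarith [step, hfrac ▸ step]

lemma lam_mono_right (hΛ : IsBivariateTDF Λ) {a b b' : ℝ} (ha : 0 ≤ a) (hb : 0 ≤ b)
    (hbb : b ≤ b') : Λ a b ≤ Λ a b' :=
  lam_mono_left (lam_swap hΛ) hb ha hbb

lemma lam_lip_right (hΛ : IsBivariateTDF Λ) {a b b' : ℝ} (ha : 0 ≤ a) (hb : 0 ≤ b)
    (hbb : b ≤ b') : Λ a b' ≤ Λ a b + (b' - b) :=
  lam_lip_left (lam_swap hΛ) hb ha hbb

end lam2

lemma log_slope (w : ℝ) :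
    Tendsto (fun s : ℝ => (-Real.log (1 - s*w))/s) (nhdsWithin 0 (Ioi 0)) (nhds w) := by
  have h1 : HasDerivAt (fun s : ℝ => 1 - s*w) (-w) 0 := by
    simpa using ((hasDerivAt_id (0:ℝ)).mul_const w).const_sub 1
  have h2 : HasDerivAt (fun s : ℝ => Real.log (1 - s*w)) (-w) 0 := by
    have := h1.log (by norm_num : (1:ℝ) - 0*w ≠ 0)
    simpa using this
  have h3 : HasDerivAt (fun s : ℝ => -Real.log (1 - s*w)) w 0 := by
    have h := h2.neg
    rw [neg_neg] at h
    exact h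
  have h4 := hasDerivAt_iff_tendsto_slope.mp h3
  have h5 : Tendsto (slope (fun s : ℝ => -Real.log (1 - s*w)) 0) (nhdsWithin 0 (Ioi 0)) (nhds w) :=
    h4.mono_left (nhdsWithin_mono 0 (fun x hx => ne_of_gt hx))
  refine h5.congr (fun s => ?_)
  rw [slope_def_field]
  simp


/-- The tail dependence function of the lower extreme value copula
`CLEV Λ` is `Λ` itself. -/
theorem stmt12 (Λ : ℝ → ℝ → ℝ) (hΛ : IsBivariateTDF Λ) :
    ∀ w1 w2 : ℝ, 0 ≤ w1 → 0 ≤ w2 →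
      Tendsto (fun s : ℝ => CLEV Λ (s * w1) (s * w2) / s) (nhdsWithin 0 (Ioi 0))
        (nhds (Λ w1 w2)) := by
  intro w1 w2 hw1 hw2
  set l := nhdsWithin (0:ℝ) (Ioi 0) with hl
  set x1 : ℝ → ℝ := fun s => -Real.log (1 - s * w1) with hx1def
  set x2 : ℝ → ℝ := fun s => -Real.log (1 - s * w2) with hx2def
  set L : ℝ → ℝ := fun s => Λ (x1 s) (x2 s) with hLdef
  -- basic eventual facts
  have hid : Tendsto (fun s : ℝ => s) l (nhds 0) := tendsto_id.mono_left nhdsWithin_le_nhds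
  have hsw1 : Tendsto (fun s : ℝ => s * w1) l (nhds 0) := by
    simpa using hid.mul_const w1
  have hsw2 : Tendsto (fun s : ℝ => s * w2) l (nhds 0) := by
    simpa using hid.mul_const w2
  have hspos : ∀ᶠ s in l, 0 < s := eventually_mem_nhdsWithin
  have hev : ∀ᶠ s in l, 0 < s ∧ s * w1 < 1 ∧ s * w2 < 1 := by
    filter_upwards [hspos, hsw1.eventually_lt_const (by norm_num : (0:ℝ) < 1),
      hsw2.eventually_lt_const (by norm_num : (0:ℝ) < 1)] with s h1 h2 h3
    exact ⟨h1, h2, h3⟩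
  -- per-s basic inequalities
  have hbase : ∀ s : ℝ, 0 < s → s * w1 < 1 → s * w2 < 1 →
      (0 < 1 - s * w1 ∧ 0 < 1 - s * w2 ∧ s * w1 ≤ x1 s ∧ s * w2 ≤ x2 s) := by
    intro s hs h1 h2
    have p1 : 0 < 1 - s * w1 := by linarith
    have p2 : 0 < 1 - s * w2 := by linarith
    have q1 := Real.log_le_sub_one_of_pos p1
    have q2 := Real.log_le_sub_one_of_pos p2
    exact ⟨p1, p2, by simp only [hx1def]; linarith, by simp only [hx2def]; linarith⟩
  -- the key algebraic identity
  have heq : ∀ᶠ s in l, CLEV Λ (s * w1) (s * w2) / s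
      = s * (w1 * w2) + ((1 - s * w1) * (1 - s * w2)) * ((Real.exp (L s) - 1) / s) := by
    filter_upwards [hev] with s hs
    obtain ⟨hspos', h1, h2⟩ := hs
    obtain ⟨p1, p2, _, _⟩ := hbase s hspos' h1 h2
    rw [CLEV, CEV, if_pos ⟨p1, p2⟩]
    have he : Real.exp (Real.log (1 - s*w1) + Real.log (1 - s*w2)
        + Λ (-Real.log (1 - s*w1)) (-Real.log (1 - s*w2)))
        = (1 - s*w1) * (1 - s*w2) * Real.exp (L s) := by
      rw [Real.exp_add, Real.exp_add, Real.exp_log p1, Real.exp_log p2]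
    rw [he]
    field_simp
    ring
  -- slope limits
  have hslope1 : Tendsto (fun s => x1 s / s) l (nhds w1) := log_slope w1
  have hslope2 : Tendsto (fun s => x2 s / s) l (nhds w2) := log_slope w2
  have he1 : Tendsto (fun s => (x1 s - s * w1) / s) l (nhds 0) := by
    have h := hslope1.sub_const w1
    rw [sub_self] at h
    apply h.congr'
    filter_upwards [hspos] with s hs
    rw [sub_div, mul_comm s w1, mul_div_assoc, div_self hs.ne', mul_one]
  have he2 : Tendsto (fun s => (x2 s - s * w2) / s) l (nhds 0) := by
    have h := hslope2.sub_const w2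
    rw [sub_self] at h
    apply h.congr'
    filter_upwards [hspos] with s hs
    rw [sub_div, mul_comm s w2, mul_div_assoc, div_self hs.ne', mul_one]
  -- squeeze for L s / s
  have hlow : ∀ᶠ s in l, Λ w1 w2 ≤ L s / s := by
    filter_upwards [hev] with s hs
    obtain ⟨hsp, h1, h2⟩ := hs
    obtain ⟨p1, p2, q1, q2⟩ := hbase s hsp h1 h2
    have hx1nn : 0 ≤ x1 s := le_trans (by positivity) q1
    have hx2nn : 0 ≤ x2 s := le_trans (by positivity) q2
    have m1 : Λ (s*w1) (s*w2) ≤ Λ (x1 s) (s*w2) :=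
      lam_mono_left hΛ (by positivity) (by positivity) q1
    have m2 : Λ (x1 s) (s*w2) ≤ Λ (x1 s) (x2 s) :=
      lam_mono_right hΛ hx1nn (by positivity) q2
    have hom : Λ (s*w1) (s*w2) = s * Λ w1 w2 := lam_hom hΛ hw1 hw2 hsp
    rw [le_div_iff₀ hsp]
    calc Λ w1 w2 * s = s * Λ w1 w2 := mul_comm _ _
      _ = Λ (s*w1) (s*w2) := hom.symm
      _ ≤ L s := le_trans m1 m2
  have hupfun : Tendsto (fun s => Λ w1 w2 + (x1 s - s*w1)/s + (x2 s - s*w2)/s) l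
      (nhds (Λ w1 w2)) := by
    have h := ((tendsto_const_nhds (x := Λ w1 w2) (f := l)).add he1).add he2
    simpa using h
  have hup : ∀ᶠ s in l, L s / s ≤ Λ w1 w2 + (x1 s - s*w1)/s + (x2 s - s*w2)/s := by
    filter_upwards [hev] with s hs
    obtain ⟨hsp, h1, h2⟩ := hs
    obtain ⟨p1, p2, q1, q2⟩ := hbase s hsp h1 h2
    have hx1nn : 0 ≤ x1 s := le_trans (by positivity) q1
    have hx2nn : 0 ≤ x2 s := le_trans (by positivity) q2
    have lip1 : Λ (x1 s) (x2 s) ≤ Λ (s*w1) (x2 s) + (x1 s - s*w1) :=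
      lam_lip_left hΛ (by positivity) hx2nn q1
    have lip2 : Λ (s*w1) (x2 s) ≤ Λ (s*w1) (s*w2) + (x2 s - s*w2) :=
      lam_lip_right hΛ (by positivity) (by positivity) q2
    have hom : Λ (s*w1) (s*w2) = s * Λ w1 w2 := lam_hom hΛ hw1 hw2 hsp
    rw [div_le_iff₀ hsp]
    have hexpand : (Λ w1 w2 + (x1 s - s*w1)/s + (x2 s - s*w2)/s) * s
        = s * Λ w1 w2 + (x1 s - s*w1) + (x2 s - s*w2) := by
      field_simp
    rw [hexpand]
    linarith [lip1, lip2, hom]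
  have hLs : Tendsto (fun s => L s / s) l (nhds (Λ w1 w2)) :=
    tendsto_of_tendsto_of_tendsto_of_le_of_le' tendsto_const_nhds hupfun hlow hup
  -- L tends to 0
  have hLto0 : Tendsto L l (nhds 0) := by
    have h := hLs.mul hid
    rw [mul_zero] at h
    apply h.congr'
    filter_upwards [hspos] with s hs
    field_simp
  -- (exp (L s) - 1)/s tends to Λ w1 w2
  have habs : ∀ᶠ s in l, |L s| ≤ 1 := by
    have h := hLto0.eventually (eventually_abs_sub_lt (0:ℝ) (by norm_num : (0:ℝ) < 1))
    filter_upwards [h] with s hs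
    simp only [sub_zero] at hs
    exact hs.le
  have hr : Tendsto (fun s => (Real.exp (L s) - 1 - L s)/s) l (nhds 0) := by
    apply squeeze_zero_norm' (a := fun s => (L s / s) * L s)
    · filter_upwards [hev, habs] with s hs habs'
      obtain ⟨hsp, h1, h2⟩ := hs
      obtain ⟨p1, p2, q1, q2⟩ := hbase s hsp h1 h2
      have hx1nn : 0 ≤ x1 s := le_trans (by positivity) q1
      have hx2nn : 0 ≤ x2 s := le_trans (by positivity) q2
      have hLnn : 0 ≤ L s := lam_nonneg hΛ hx1nn hx2nn
      have hb := Real.abs_exp_sub_one_sub_id_le habs'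
      rw [Real.norm_eq_abs, abs_div, abs_of_pos hsp]
      calc |Real.exp (L s) - 1 - L s| / s ≤ |L s|^2 / s := by gcongr; rw [sq_abs]; exact hb
        _ = (L s / s) * L s := by
            rw [abs_of_nonneg hLnn, sq, div_mul_eq_mul_div]
    · have h := hLs.mul hLto0
      rwa [mul_zero] at h
  have hexp : Tendsto (fun s => (Real.exp (L s) - 1)/s) l (nhds (Λ w1 w2)) := by
    have h := hr.add hLs
    rw [zero_add] at h
    apply h.congr
    intro s
    rw [← add_div]
    congr 1
    ring
  -- assemble
  have hcont : Tendsto (fun s : ℝ => (1 - s*w1) * (1 - s*w2)) l (nhds 1) := by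
    have h1 : Tendsto (fun s : ℝ => 1 - s*w1) l (nhds 1) := by
      have := (tendsto_const_nhds (x := (1:ℝ)) (f := l)).sub hsw1
      simpa using this
    have h2 : Tendsto (fun s : ℝ => 1 - s*w2) l (nhds 1) := by
      have := (tendsto_const_nhds (x := (1:ℝ)) (f := l)).sub hsw2
      simpa using this
    simpa using h1.mul h2
  have hmain : Tendsto (fun s => s * (w1*w2)
      + ((1 - s*w1)*(1 - s*w2)) * ((Real.exp (L s) - 1)/s)) l (nhds (Λ w1 w2)) := by
    have h := (hid.mul_const (w1*w2)).add (hcont.mul hexp)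
    simpa using h
  exact Filter.Tendsto.congr' (heq.mono fun s h => h.symm) hmain
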